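/- Let G be a finite simple graph in which every vertex has positive degree, and suppose the marked set M can be partitioned into disjoint pairs of adjacent vertices of equal degree: there is a set P of pairs such that each {i,j} ∈ P satisfies i adjacent to j and deg(i) = deg(j), the pairs are pairwise disjoint, and M equals the union of the pairs. Then the state φ defined by φ(e) = −(deg(i)−1)·a if e is one of the two darts between the vertices i,j of some pair in P, and φ(e) = a on all other darts, is fixed by one step of the search algorithm: (S∘C∘Q)φ = φ. -/

import Mathlib

namespace GraphWalk

variable {V : Type*}

/-- The flip-flop shift operator `S` on the darts of a simple graph:
`(Sψ)(e) = ψ(e.symm)`. -/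
noncomputable def shift (G : SimpleGraph V) (ψ : G.Dart → ℂ) : G.Dart → ℂ :=
  fun e => ψ e.symm

/-- The Grover coin `C`:
`(Cψ)(e) = (2/deg(e.fst)) Σ_{e' : e'.fst = e.fst} ψ(e') − ψ(e)`. -/
noncomputable def coin [Fintype V] [DecidableEq V] (G : SimpleGraph V)
    [DecidableRel G.Adj] (ψ : G.Dart → ℂ) : G.Dart → ℂ :=
  fun e => (2 / (G.degree e.fst : ℂ)) *
      (∑ e' ∈ Finset.univ.filter (fun e' : G.Dart => e'.fst = e.fst), ψ e') - ψ e

/-- The query `Q`, flipping the sign of all amplitudes at marked vertices. -/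
noncomputable def query [DecidableEq V] (G : SimpleGraph V) (M : Finset V)
    (ψ : G.Dart → ℂ) : G.Dart → ℂ :=
  fun e => if e.fst ∈ M then -ψ e else ψ e

/-- One step of the search algorithm, `U' = S ∘ C ∘ Q`. -/
noncomputable def step [Fintype V] [DecidableEq V] (G : SimpleGraph V)
    [DecidableRel G.Adj] (M : Finset V) (ψ : G.Dart → ℂ) : G.Dart → ℂ :=
  shift G (coin G (query G M ψ))

/-- One step of the quantum walk without query, `U = S ∘ C`. -/
noncomputable def walk [Fintype V] [DecidableEq V] (G : SimpleGraph V)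
    [DecidableRel G.Adj] (ψ : G.Dart → ℂ) : G.Dart → ℂ :=
  shift G (coin G ψ)

end GraphWalk

/-- Suppose the marked set `M` of a finite simple graph (every vertex of positive
degree) is partitioned into pairwise disjoint pairs `P` of adjacent vertices of equal
degree. Then the state equal to `-(deg(i)-1)·a` on the two darts between the vertices
of each pair and to `a` on every other dart is fixed by one step of the search
algorithm `S ∘ C ∘ Q`. -/
theorem paired_marked_stationary {V : Type*} [Fintype V] [DecidableEq V]
    (G : SimpleGraph V) [DecidableRel G.Adj] (hdeg : ∀ v : V, 0 < G.degree v)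
    (P : Finset (V × V))
    (hadj : ∀ p ∈ P, G.Adj p.1 p.2 ∧ G.degree p.1 = G.degree p.2)
    (hdisj : ∀ p ∈ P, ∀ q ∈ P, p ≠ q → ({p.1, p.2} : Finset V) ∩ {q.1, q.2} = ∅)
    (M : Finset V) (hM : M = P.biUnion fun p => {p.1, p.2}) (a : ℂ) :
    GraphWalk.step G M
      (fun e => if e.toProd ∈ P ∨ e.toProd.swap ∈ P
        then -((G.degree e.fst : ℂ) - 1) * a else a)
    = fun e => if e.toProd ∈ P ∨ e.toProd.swap ∈ P
        then -((G.degree e.fst : ℂ) - 1) * a else a := by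
  classical
  set φ : G.Dart → ℂ := fun e => if e.toProd ∈ P ∨ e.toProd.swap ∈ P
        then -((G.degree e.fst : ℂ) - 1) * a else a with hφ
  have share : ∀ p ∈ P, ∀ q ∈ P, ∀ v : V, (v = p.1 ∨ v = p.2) →
      (v = q.1 ∨ v = q.2) → p = q := by
    intro p hp q hq v hv1 hv2
    by_contra h
    have hE := hdisj p hp q hq h
    have hv : v ∈ ({p.1, p.2} : Finset V) ∩ {q.1, q.2} := by
      simp only [Finset.mem_inter, Finset.mem_insert, Finset.mem_singleton]
      exact ⟨hv1, hv2⟩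
    rw [hE] at hv
    exact absurd hv (Finset.notMem_empty v)
  have memM : ∀ v : V, v ∈ M ↔ ∃ p ∈ P, v = p.1 ∨ v = p.2 := by
    intro v
    subst hM
    simp only [Finset.mem_biUnion, Finset.mem_insert, Finset.mem_singleton]
  have pdM : ∀ e : G.Dart, (e.toProd ∈ P ∨ e.toProd.swap ∈ P) → e.fst ∈ M := by
    intro e he
    rw [memM]
    rcases he with h | h
    · exact ⟨e.toProd, h, Or.inl rfl⟩
    · exact ⟨e.toProd.swap, h, Or.inr rfl⟩
  have uniq : ∀ p ∈ P, ∀ e : G.Dart, (e.toProd ∈ P ∨ e.toProd.swap ∈ P) →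
      (e.fst = p.1 ∨ e.fst = p.2) → (e.toProd = p ∨ e.toProd = p.swap) := by
    intro p hp e he hv
    rcases he with h | h
    · exact Or.inl (share e.toProd h p hp e.fst (Or.inl rfl) hv)
    · right
      have := share e.toProd.swap h p hp e.fst (Or.inr rfl) hv
      rw [← this, Prod.swap_swap]
  have key : ∀ e : G.Dart, GraphWalk.coin G (GraphWalk.query G M φ) e = φ e := by
    intro e
    set v := e.fst with hv
    set D := Finset.univ.filter (fun e' : G.Dart => e'.fst = v) with hD
    have hcard : D.card = G.degree v := by
      simpa using G.dart_fst_fiber_card_eq_degree v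
    by_cases hvM : v ∈ M
    · obtain ⟨p, hp, hvp⟩ := (memM v).mp hvM
      obtain ⟨hpadj, hpdeg⟩ := hadj p hp
      obtain ⟨d0, hd0f, hd0pd⟩ : ∃ d0 : G.Dart, d0.fst = v ∧
          (d0.toProd = p ∨ d0.toProd = p.swap) := by
        rcases hvp with h | h
        · exact ⟨⟨(p.1, p.2), hpadj⟩, h.symm, Or.inl rfl⟩
        · exact ⟨⟨(p.2, p.1), hpadj.symm⟩, h.symm, Or.inr rfl⟩
      have hd0pair : d0.toProd ∈ P ∨ d0.toProd.swap ∈ P := by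
        rcases hd0pd with h | h
        · exact Or.inl (h ▸ hp)
        · right; rw [h, Prod.swap_swap]; exact hp
      have hne : p.1 ≠ p.2 := G.ne_of_adj hpadj
      have huniq : ∀ e' : G.Dart, e'.fst = v →
          (e'.toProd ∈ P ∨ e'.toProd.swap ∈ P) → e' = d0 := by
        intro e' hf he'
        have h1 := uniq p hp e' he' (by
          rw [hf]
          rcases hvp with h | h
          · exact Or.inl h
          · exact Or.inr h)
        apply SimpleGraph.Dart.ext
        rcases h1 with h1 | h1 <;> rcases hd0pd with h2 | h2
        · rw [h1, h2]
        · exfalso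
          apply hne
          have ha : p.1 = v := by rw [← hf]; exact (congrArg Prod.fst h1).symm
          have hb : p.2 = v := by rw [← hd0f]; exact (congrArg Prod.fst h2).symm
          rw [ha, hb]
        · exfalso
          apply hne
          have ha : p.2 = v := by rw [← hf]; exact (congrArg Prod.fst h1).symm
          have hb : p.1 = v := by rw [← hd0f]; exact (congrArg Prod.fst h2).symm
          rw [ha, hb]
        · rw [h1, h2]
      have hd0D : d0 ∈ D := by
        rw [hD, Finset.mem_filter]
        exact ⟨Finset.mem_univ _, hd0f⟩
      have hq : ∀ e' ∈ D, GraphWalk.query G M φ e' = -φ e' := by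
        intro e' he'
        have hf : e'.fst ∈ M := by
          rw [(Finset.mem_filter.mp he').2]; exact hvM
        simp [GraphWalk.query, hf]
      have hsum : ∑ e' ∈ D, GraphWalk.query G M φ e' = 0 := by
        rw [Finset.sum_congr rfl hq]
        rw [← Finset.add_sum_erase D (fun e' => -φ e') hd0D]
        have h1 : φ d0 = -((G.degree v : ℂ) - 1) * a := by
          simp only [hφ]
          rw [if_pos hd0pair, hd0f]
        have h2 : ∀ x ∈ D.erase d0, -φ x = -a := by
          intro x hx
          obtain ⟨hxne, hxD⟩ := Finset.mem_erase.mp hx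
          have hxf : x.fst = v := (Finset.mem_filter.mp hxD).2
          have hnp : ¬(x.toProd ∈ P ∨ x.toProd.swap ∈ P) :=
            fun h => hxne (huniq x hxf h)
          simp [hφ, hnp]
        rw [Finset.sum_congr rfl h2, Finset.sum_const,
          Finset.card_erase_of_mem hd0D, hcard, h1, nsmul_eq_mul,
          Nat.cast_sub (hdeg v), Nat.cast_one]
        ring
      show (2 / (G.degree e.fst : ℂ)) *
          (∑ e' ∈ Finset.univ.filter (fun e' : G.Dart => e'.fst = e.fst),
            GraphWalk.query G M φ e') - GraphWalk.query G M φ e = φ e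
      rw [show Finset.univ.filter (fun e' : G.Dart => e'.fst = e.fst) = D from rfl,
        hsum, mul_zero, zero_sub]
      have : e.fst ∈ M := hvM
      simp [GraphWalk.query, this]
    · have hnpd : ∀ e' : G.Dart, e'.fst = v →
          ¬(e'.toProd ∈ P ∨ e'.toProd.swap ∈ P) := by
        intro e' hf h
        exact hvM (hf ▸ pdM e' h)
      have hq : ∀ e' ∈ D, GraphWalk.query G M φ e' = a := by
        intro e' he'
        have hf : e'.fst = v := (Finset.mem_filter.mp he').2
        have h1 : e'.fst ∉ M := by rw [hf]; exact hvM
        have h2 := hnpd e' hf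
        simp [GraphWalk.query, hφ, h1, h2]
      have hsum : ∑ e' ∈ D, GraphWalk.query G M φ e' = (G.degree v : ℂ) * a := by
        rw [Finset.sum_congr rfl hq, Finset.sum_const, hcard, nsmul_eq_mul]
      show (2 / (G.degree e.fst : ℂ)) *
          (∑ e' ∈ Finset.univ.filter (fun e' : G.Dart => e'.fst = e.fst),
            GraphWalk.query G M φ e') - GraphWalk.query G M φ e = φ e
      rw [show Finset.univ.filter (fun e' : G.Dart => e'.fst = e.fst) = D from rfl,
        hsum]
      have hz : (G.degree v : ℂ) ≠ 0 := Nat.cast_ne_zero.mpr (hdeg v).ne'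
      have hpe : ¬(e.toProd ∈ P ∨ e.toProd.swap ∈ P) := hnpd e rfl
      have h1 : e.fst ∉ M := hvM
      simp only [GraphWalk.query, hφ, if_neg h1, if_neg hpe]
      rw [← hv]
      field_simp
      ring
  funext e
  show GraphWalk.coin G (GraphWalk.query G M φ) e.symm = φ e
  rw [key e.symm]
  have hsymtp : e.symm.toProd = e.toProd.swap := rfl
  by_cases h : e.toProd ∈ P ∨ e.toProd.swap ∈ P
  · have hsym : e.symm.toProd ∈ P ∨ e.symm.toProd.swap ∈ P := by
      rcases h with h | h
      · right; rw [hsymtp, Prod.swap_swap]; exact h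
      · left; rw [hsymtp]; exact h
    have hdegeq : G.degree e.symm.fst = G.degree e.fst := by
      rcases h with h | h
      · exact ((hadj _ h).2).symm
      · exact (hadj _ h).2
    simp only [hφ, if_pos h, if_pos hsym, hdegeq]
  · have hsym : ¬(e.symm.toProd ∈ P ∨ e.symm.toProd.swap ∈ P) := by
      intro hc
      apply h
      rcases hc with hc | hc
      · right; rw [← hsymtp]; exact hc
      · left; rw [← Prod.swap_swap e.toProd, ← hsymtp]; exact hc
    simp only [hφ, if_neg h, if_neg hsym]
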